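/- Improved truncated converse for lossless source coding: Let S be a nonempty finite set, P_S a probability mass function on S, M a positive integer, and γ ≥ 0. For every encoder f : S → Fin M and decoder g : Fin M → S, the error probability satisfies ∑_{s} P_S(s)·𝟙{g(f(s)) ≠ s} ≥ ∑_{s∈S} min{P_S(s), exp(−γ)/M} − exp(−γ). (This bound dominates the standard bound ℙ[−log P_S(S) ≥ log M + γ] − exp(−γ).) -/

import Mathlib

open Finset
open scoped Classical

theorem lossless_truncated_converse
    {S : Type*} [Fintype S] [Nonempty S] [DecidableEq S]
    (P : S → ℝ) (hP0 : ∀ s, 0 ≤ P s) (hP1 : ∑ s, P s = 1)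
    (M : ℕ) (hM : 0 < M)
    (γ : ℝ) (hγ : 0 ≤ γ)
    (f : S → Fin M) (g : Fin M → S) :
    ∑ s, P s * (if g (f s) ≠ s then (1:ℝ) else 0) ≥
      (∑ s, min (P s) (Real.exp (-γ) / M)) - Real.exp (-γ) := by
  set c : ℝ := Real.exp (-γ) / M with hc
  have hc0 : 0 ≤ c := div_nonneg (Real.exp_pos _).le (Nat.cast_nonneg M)
  set A : Finset S := Finset.univ.filter (fun s => g (f s) = s) with hA
  -- f is injective on A
  have hinj : Set.InjOn f A := by
    intro a ha b hb hab
    simp [hA] at ha hb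
    rw [← ha, ← hb, hab]
  have hcard : A.card ≤ M := by
    have := Finset.card_le_card_of_injOn f (fun a _ => Finset.mem_univ (f a)) hinj
    simpa using this
  have h1 : ∑ s ∈ A, min (P s) c ≤ Real.exp (-γ) := by
    calc ∑ s ∈ A, min (P s) c ≤ ∑ s ∈ A, c :=
          Finset.sum_le_sum (fun s _ => min_le_right _ _)
      _ = A.card * c := by rw [Finset.sum_const, nsmul_eq_mul]
      _ ≤ M * c := by
          exact mul_le_mul_of_nonneg_right (by exact_mod_cast hcard) hc0
      _ = Real.exp (-γ) := by
          rw [hc]; field_simp [(Nat.cast_ne_zero.mpr hM.ne' : (M:ℝ) ≠ 0)]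
  have h2 : ∑ s ∈ Aᶜ, min (P s) c ≤ ∑ s ∈ Aᶜ, P s :=
    Finset.sum_le_sum (fun s _ => min_le_left _ _)
  have hsplit : ∑ s, min (P s) c = ∑ s ∈ A, min (P s) c + ∑ s ∈ Aᶜ, min (P s) c :=
    (Finset.sum_add_sum_compl A _).symm
  have herr : ∑ s, P s * (if g (f s) ≠ s then (1:ℝ) else 0) = ∑ s ∈ Aᶜ, P s := by
    rw [← Finset.sum_filter_add_sum_filter_not Finset.univ (fun s => g (f s) = s)
      (fun s => P s * (if g (f s) ≠ s then (1:ℝ) else 0))]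
    have e1 : ∑ s ∈ Finset.univ.filter (fun s => g (f s) = s),
        P s * (if g (f s) ≠ s then (1:ℝ) else 0) = 0 := by
      apply Finset.sum_eq_zero
      intro s hs
      simp [Finset.mem_filter] at hs
      simp [hs]
    have e2 : ∀ s ∈ Finset.univ.filter (fun s => ¬ g (f s) = s),
        P s * (if g (f s) ≠ s then (1:ℝ) else 0) = P s := by
      intro s hs
      simp [Finset.mem_filter] at hs
      simp [hs]
    rw [e1, Finset.sum_congr rfl e2, zero_add]
    congr 1
    ext s
    simp [hA, Finset.mem_compl]
  rw [herr]
  have : ∑ s, min (P s) c ≤ Real.exp (-γ) + ∑ s ∈ Aᶜ, P s := by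
    rw [hsplit]; exact add_le_add h1 h2
  linarith
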